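/- Let P = 56x⁸ − 52x⁷ + 180x⁶ − 40x⁵ + 40x⁴ + 284x³ + 84x² + 128x − 40, A = 96x⁹ − 16x⁸ − 160x⁷ + 704x⁶ − 208x⁵ − 512x⁴ + 208x³ + 208x² − 128x, and B = 40x⁹ − 108x⁸ + 316x⁷ − 198x⁶ + 316x⁵ + 122x⁴ + 180x³ − 178x² − 84x − 22, regarded as polynomials in ℂ[x]. Then for every pair (a,b) ∈ ℂ² with (a,b) ≠ (0,0), the polynomials P and a·A + b·B have at most one common root in ℂ; equivalently, P and a·A + b·B have no common factor of degree ≥ 2 in ℂ[x]. -/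

import Mathlib

open Polynomial

set_option maxHeartbeats 2000000 in
/-- Non-vanishing of the invariant `Φ₈,₉(P,A,B)`: for every nontrivial complex
pair `(a,b)`, the polynomials `P` and `a·A + b·B` have at most one common root
in `ℂ`; equivalently, they have no common factor of degree `≥ 2` in `ℂ[x]`. -/
theorem P_and_pencil_no_two_common_roots
    (P A B : Polynomial ℂ)
    (hP : P = 56 * X ^ 8 - 52 * X ^ 7 + 180 * X ^ 6 - 40 * X ^ 5 + 40 * X ^ 4
        + 284 * X ^ 3 + 84 * X ^ 2 + 128 * X - 40)
    (hA : A = 96 * X ^ 9 - 16 * X ^ 8 - 160 * X ^ 7 + 704 * X ^ 6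
        - 208 * X ^ 5 - 512 * X ^ 4 + 208 * X ^ 3 + 208 * X ^ 2 - 128 * X)
    (hB : B = 40 * X ^ 9 - 108 * X ^ 8 + 316 * X ^ 7 - 198 * X ^ 6
        + 316 * X ^ 5 + 122 * X ^ 4 + 180 * X ^ 3 - 178 * X ^ 2 - 84 * X - 22) :
    ∀ a b : ℂ, ¬(a = 0 ∧ b = 0) →
      (∀ α β : ℂ,
        P.eval α = 0 → (C a * A + C b * B).eval α = 0 →
        P.eval β = 0 → (C a * A + C b * B).eval β = 0 → α = β) ∧
      ¬ ∃ d : Polynomial ℂ, 2 ≤ d.degree ∧ d ∣ P ∧ d ∣ (C a * A + C b * B) := by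
  intro a b hab
  have hor : a ≠ 0 ∨ b ≠ 0 := by
    by_cases ha : a = 0
    · exact Or.inr fun hb => hab ⟨ha, hb⟩
    · exact Or.inl ha
  have key : ∀ α β : ℂ,
      P.eval α = 0 → (C a * A + C b * B).eval α = 0 →
      P.eval β = 0 → (C a * A + C b * B).eval β = 0 → α = β := by
    intro α β h1 h2 h3 h4
    rw [hP] at h1 h3
    rw [hA, hB] at h2 h4
    simp only [eval_add, eval_sub, eval_mul, eval_pow, eval_ofNat, eval_X, eval_C] at h1 h2 h3 h4
    have hdet : (96 * α ^ 9 - 16 * α ^ 8 - 160 * α ^ 7 + 704 * α ^ 6 - 208 * α ^ 5 - 512 * α ^ 4 + 208 * α ^ 3 + 208 * α ^ 2 - 128 * α) * (40 * β ^ 9 - 108 * β ^ 8 + 316 * β ^ 7 - 198 * β ^ 6 + 316 * β ^ 5 + 122 * β ^ 4 + 180 * β ^ 3 - 178 * β ^ 2 - 84 * β - 22) - (96 * β ^ 9 - 16 * β ^ 8 - 160 * β ^ 7 + 704 * β ^ 6 - 208 * β ^ 5 - 512 * β ^ 4 + 208 * β ^ 3 + 208 * β ^ 2 - 128 * β) *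 (40 * α ^ 9 - 108 * α ^ 8 + 316 * α ^ 7 - 198 * α ^ 6 + 316 * α ^ 5 + 122 * α ^ 4 + 180 * α ^ 3 - 178 * α ^ 2 - 84 * α - 22) = 0 := by
      rcases hor with ha | hb
      · have h5 : a * ((96 * α ^ 9 - 16 * α ^ 8 - 160 * α ^ 7 + 704 * α ^ 6 - 208 * α ^ 5 - 512 * α ^ 4 + 208 * α ^ 3 + 208 * α ^ 2 - 128 * α) * (40 * β ^ 9 - 108 * β ^ 8 + 316 * β ^ 7 - 198 * β ^ 6 + 316 * β ^ 5 + 122 * β ^ 4 + 180 * β ^ 3 - 178 * β ^ 2 - 84 * β - 22) - (96 * β ^ 9 - 16 * β ^ 8 - 160 * β ^ 7 + 704 * β ^ 6 - 208 * β ^ 5 - 512 * β ^ 4 + 208 * β ^ 3 + 208 * β ^ 2 - 128 * β) * (40 * α ^ 9 - 108 * α ^ 8 + 316 * α ^ 7 - 198 * α ^ 6 + 316 * α ^ 5 + 122 * α ^ 4 + 180 * α ^ 3 - 178 * α ^ 2 - 84 * α - 22)) = 0 := by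
          linear_combination (40 * β ^ 9 - 108 * β ^ 8 + 316 * β ^ 7 - 198 * β ^ 6 + 316 * β ^ 5 + 122 * β ^ 4 + 180 * β ^ 3 - 178 * β ^ 2 - 84 * β - 22) * h2 - (40 * α ^ 9 - 108 * α ^ 8 + 316 * α ^ 7 - 198 * α ^ 6 + 316 * α ^ 5 + 122 * α ^ 4 + 180 * α ^ 3 - 178 * α ^ 2 - 84 * α - 22) * h4
        exact (mul_eq_zero.mp h5).resolve_left ha
      · have h5 : b * ((96 * α ^ 9 - 16 * α ^ 8 - 160 * α ^ 7 + 704 * α ^ 6 - 208 * α ^ 5 - 512 * α ^ 4 + 208 * α ^ 3 + 208 * α ^ 2 - 128 * α) * (40 * β ^ 9 - 108 * β ^ 8 + 316 * β ^ 7 - 198 * β ^ 6 + 316 * β ^ 5 + 122 * β ^ 4 + 180 * β ^ 3 - 178 * β ^ 2 - 84 * β - 22) - (96 * β ^ 9 - 16 * β ^ 8 - 160 * β ^ 7 + 704 * β ^ 6 - 208 * β ^ 5 - 512 * β ^ 4 + 208 * β ^ 3 + 208 * β ^ 2 - 128 * β) * (40 * α ^ 9 - 108 * α ^ 8 + 316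 * α ^ 7 - 198 * α ^ 6 + 316 * α ^ 5 + 122 * α ^ 4 + 180 * α ^ 3 - 178 * α ^ 2 - 84 * α - 22)) = 0 := by
          linear_combination (96 * α ^ 9 - 16 * α ^ 8 - 160 * α ^ 7 + 704 * α ^ 6 - 208 * α ^ 5 - 512 * α ^ 4 + 208 * α ^ 3 + 208 * α ^ 2 - 128 * α) * h4 - (96 * β ^ 9 - 16 * β ^ 8 - 160 * β ^ 7 + 704 * β ^ 6 - 208 * β ^ 5 - 512 * β ^ 4 + 208 * β ^ 3 + 208 * β ^ 2 - 128 * β) * h2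
        exact (mul_eq_zero.mp h5).resolve_left hb
    have h6 : α - β = 0 := by
      linear_combination ((108595065374618355221171591158400249019225099148361/53558223804068977334341406264626651549419501399999360) + (289525212720874887421569923209042082365470031822846296463/19300241530034296672203269161520860152348811524503769369600) * β + (203428823423493864304824799835901335862569651370099597161/51467310746758124459208717764055627072930164065343384985600) * β ^ 2 + (-1975266986622641929172541950581181165411733188058832872109/154401932240274373377626153292166881218790492196030154956800) * β ^ 3 + (1823915451986577136717863925143612994493244980631167567/793840268587528911967229579908313013978357286354910822400) * β ^ 4 + (-1730870087952800772035101906805552881275330954911094983/48554066742224645716234639400052478370688834023908853760) * β ^ 5 + (-17425189354862869317076534760228249932856957841566037109/2412530191254287084025408645190107519043601440562971171200) * β ^ 6 + (20426135495748776479619791208696691338443307100310479173/1942162669688985828649385576002099134827553360956354150400) * β ^ 7 + (-73366910703175322119667685570338795658603124051619771903/2058692429870324978368348710562225082917206562613735399424) * β ^ 8 + (4050227899572997858689152976940059782476010257963972522277/308803864480548746755252306584333762437580984392060309913600) * β ^ 9 + (-3681445704749646205502405980827392321244673010926141819/612706080318549100704865687667328893725359096015992678400) * β ^ 10 + (-1945922704119179218723827870683307069780660236507873190073/308803864480548746755252306584333762437580984392060309913600)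 * β ^ 11 + (242264609314740762237295193137187354397975683956291599847/61760772896109749351050461316866752487516196878412061982720) * β ^ 12 + (-20724670832614886950729015306072023815713896562422884323/7918047807193557609109033502162404165066179086975905382400) * β ^ 13 + (2726947916244541751422564612145259434388673089369803093/4411483778293553525075032951204768034822585491315147284480) * β ^ 14 + (853557242320995930695839591591982021288101051085347187/7720096612013718668881307664608344060939524609801507747840) * α + (-1597684671990021059800043297332731415099914969087502493411/212302656830377263394235960776729461675836926769541463065600) * α * β + (-1980881949400106113157479707772991557393571540037833056219/212302656830377263394235960776729461675836926769541463065600) * α * β ^ 2 + (-2824846409971620667033618740224535923635963996978807125379/106151328415188631697117980388364730837918463384770731532800) * α * β ^ 3 + (1105068200678233575090830433465837449145370032574149143171/48526321561229088775825362463252448383048440404466620129280) * α * β ^ 4 + (609769049799478072245405141996448335902148062354689396303/141535104553584842262823973851152974450557951179694308710400) * α * β ^ 5 + (79315414598263944767742623838762930296351428849864076803/1665118877100998144268517339425329111183034719761109514240) * α * β ^ 6 + (141080416270638863873651945367263111837053617645439947683/39498168712628328073346225260786876590853381724565853593600) * α * β ^ 7 + (488947672525847412061002132573080093825585250536074421711/13064778881869370055029905278567966872359195493510243880960)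 * α * β ^ 8 + (640344837229876321444200514502294827798837097428170531197/113228083642867873810259179080922379560446360943755446968320) * α * β ^ 9 + (-211235623243864568327850920728766179577409880223847997813/16022842024934133086357431002017317862327315227889921740800) * α * β ^ 10 + (1533289452451373112323886577099981377232420012232488920913/43549262939564566850099684261893222907863984978367479603200) * α * β ^ 11 + (-3610483409064190901231947561051826165949478091917357047127/188713472738113123017098631801537299267410601572925744947200) * α * β ^ 12 + (665333914186286086352862438261047845886158018218194729149/58566250160104072660478885731511575634713634970907989811200) * α * β ^ 13 + (-45861217543480507976967337779733513417270007635611743533/13479533767008080215507045128681235661957900112351838924800) * α * β ^ 14 + (-11179542467170161302861557617228225646600233289769048993/4411483778293553525075032951204768034822585491315147284480) * α ^ 2 + (-3391796653017312600817597104317469223180912492826992651879/283070209107169684525647947702305948901115902359388617420800) * α ^ 2 * β + (-38063652244471348905531842098742993318513441231862841147343/3396842509286036214307775372427671386813390828312663409049600) * α ^ 2 * β ^ 2 + (1289974981529578188746111628566829110373250031375846353669/32350881040819392517216908308834965588698960269644413419520) * α ^ 2 * β ^ 3 + (-34145611638256553651128869618729142414428690369863272415177/1698421254643018107153887686213835693406695414156331704524800)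 * α ^ 2 * β ^ 4 + (295105219289305365590494257414424704437214280115556859219/19522083386701357553492961910503858544904544990302663270400) * α ^ 2 * β ^ 5 + (1774257385729767391578754474757361064266981213411588935119/99907132626059888656111040365519746670982083185666570854400) * α ^ 2 * β ^ 6 + (1628960290977900266373215752560380296431508634698462954261/130647788818693700550299052785679668723591954935102438809600) * α ^ 2 * β ^ 7 + (-24378862963911433655951083359320071052893168193160244012217/1698421254643018107153887686213835693406695414156331704524800) * α ^ 2 * β ^ 8 + (265218933178600039785403344287981596728095701289394124847/33968425092860362143077753724276713868133908283126634090496) * α ^ 2 * β ^ 9 + (83101163109749900989082095130705957308083132103384425335357/3396842509286036214307775372427671386813390828312663409049600) * α ^ 2 * β ^ 10 + (-18700244623508576983046776925888323501199336563320739741571/679368501857207242861555074485534277362678165662532681809920) * α ^ 2 * β ^ 11 + (7541518150996226412726285892422325043778052210140262798127/339684250928603621430777537242767138681339082831266340904960) * α ^ 2 * β ^ 12 + (-16081743327977942486619393662198031459290908363859464438889/1698421254643018107153887686213835693406695414156331704524800) * α ^ 2 * β ^ 13 + (400578867956152275970052955630518695632160657494977481479/121315803903072721939563406158131120957621101011166550323200)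 * α ^ 2 * β ^ 14 + (2659572127967541315628247703008121442740031602948107569/30880386448054874675525230658433376243758098439206030991360) * α ^ 3 + (-167814837904250018869406146742955738084791122134701519477/849210627321509053576943843106917846703347707078165852262400) * α ^ 3 * β + (83272263957222380634432398644695767000032426517900415512833/3396842509286036214307775372427671386813390828312663409049600) * α ^ 3 * β ^ 2 + (33193835549353914193057254579335849661878997125136910332733/3396842509286036214307775372427671386813390828312663409049600) * α ^ 3 * β ^ 3 + (-5270001228643211727848342080016167971608047332891916359569/113228083642867873810259179080922379560446360943755446968320) * α ^ 3 * β ^ 4 + (4749468353595695521773469734857808359546824949779269689237/188713472738113123017098631801537299267410601572925744947200) * α ^ 3 * β ^ 5 + (-478652407261513455898872626962474724759226799051669504661/19981426525211977731222208073103949334196416637133314170880) * α ^ 3 * β ^ 6 + (-7328430675850386038811681942197520540230123535471724512433/339684250928603621430777537242767138681339082831266340904960) * α ^ 3 * β ^ 7 + (-23637220745115691972312301172406236999812654572727983755101/1698421254643018107153887686213835693406695414156331704524800) * α ^ 3 * β ^ 8 + (229171485623633283329942821628498589288789964000844905913/60657901951536360969781703079065560478810550505583275161600) * α ^ 3 *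 β ^ 9 + (-17030383657646403525259666213059950636022391455498239851099/3396842509286036214307775372427671386813390828312663409049600) * α ^ 3 * β ^ 10 + (-34444944370885808182071874263401216093578872370913406619283/3396842509286036214307775372427671386813390828312663409049600) * α ^ 3 * β ^ 11 + (11578086635317551222134936021402893400764526051317699309973/1698421254643018107153887686213835693406695414156331704524800) * α ^ 3 * β ^ 12 + (-8905984435795262115855611393245152958633251358602285882191/1698421254643018107153887686213835693406695414156331704524800) * α ^ 3 * β ^ 13 + (17855782882098697638090557715077017071840245220586417897/9331984915620978610735646627548547765970853923935888486400) * α ^ 3 * β ^ 14 + (5863978652258769920761655251019298748307701596740417203/2807307858914079515956839150766670567614372585382366453760) * α ^ 4 + (549695705362204390752331363256045794923610719784198489261/77200966120137186688813076646083440609395246098015077478400) * α ^ 4 * β + (-1326212230359247355153652681661136830222575583492079810927/308803864480548746755252306584333762437580984392060309913600) * α ^ 4 * β ^ 2 + (-6489748561261783790558199877838786284200872213185747312907/308803864480548746755252306584333762437580984392060309913600) * α ^ 4 * β ^ 3 + (191389727594953335462288469114058867356748591695258578079/6054977734912720524612790325183014949756489890040398233600) * α ^ 4 * β ^ 4 +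 (-565883597415795238475232674995549052039369793412991147923/10293462149351624891841743552811125414586032813068676997120) * α ^ 4 * β ^ 5 + (469343893061916734800212691744781786132339256449289428447/14036539294570397579784195753833352838071862926911832268800) * α ^ 4 * β ^ 6 + (111521768649477839843204298942371311126958050668491773631/44114837782935535250750329512047680348225854913151472844800) * α ^ 4 * β ^ 7 + (-12846476235857665884771566978622749844595104637232863183/4825060382508574168050817290380215038087202881125942342400) * α ^ 4 * β ^ 8 + (1672660400227236051803947650078750966263986040202754186129/308803864480548746755252306584333762437580984392060309913600) * α ^ 4 * β ^ 9 + (-3906325244666618199883345016070956928036591818608896046009/308803864480548746755252306584333762437580984392060309913600) * α ^ 4 * β ^ 10 + (94208637094384067646162084117202832223547986556938415777/5324204560009461150952625975591961421337603179173453619200) * α ^ 4 * β ^ 11 + (-316117246048868683056119432116596235158632465432628512521/28073078589140795159568391507666705676143725853823664537600) * α ^ 4 * β ^ 12 + (25377561909961431618695494605529611828904147505721859873/4010439798448685022795484501095243668020532264831952076800) * α ^ 4 * β ^ 13 + (-4590636249192345521658095532601198732734440548885270991/2005219899224342511397742250547621834010266132415976038400) * α ^ 4 * β ^ 14 + (-46295446922900032253742049796679620105203814383408901/74231698192439602585397189082772539047495428940399112960)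 * α ^ 5 + (-84434735696668440780474331731287971824099565886413119041/11794592046132070188568664487596081204213162598307859059200) * α ^ 5 * β + (9977608254437171839315719127312746153067153784008090322387/849210627321509053576943843106917846703347707078165852262400) * α ^ 5 * β ^ 2 + (751299887639027842405054077517743656608615020224780217553/283070209107169684525647947702305948901115902359388617420800) * α ^ 5 * β ^ 3 + (-197341729259694364467346310610098371492087247364469224613/6409136809973653234542972400806927144930926091155968696320) * α ^ 5 * β ^ 4 + (342078770311440781426575661345280834149993325868045154031/10109650325256060161630283846510926746468425084263879193600) * α ^ 5 * β ^ 5 + (41699260905303135787418718079258798012191702181516748521/1930024153003429667220326916152086015234881152450376936960) * α ^ 5 * β ^ 6 + (-77253728394593942888885118405452263770633889786950981581293/1698421254643018107153887686213835693406695414156331704524800) * α ^ 5 * β ^ 7 + (4488781654297066802967746505120087202036601752322182215887/169842125464301810715388768621383569340669541415633170452480) * α ^ 5 * β ^ 8 + (1916063954684666881387136587301353924678549281098472711049/339684250928603621430777537242767138681339082831266340904960) * α ^ 5 * β ^ 9 + (-2022982900296026486124896388689502891350511520990851813323/212302656830377263394235960776729461675836926769541463065600) * α ^ 5 * β ^ 10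 + (11165850621530190002832727249214940637851457888146217154831/1698421254643018107153887686213835693406695414156331704524800) * α ^ 5 * β ^ 11 + (-96699535239576881189415256660743163485166446425106113999/154401932240274373377626153292166881218790492196030154956800) * α ^ 5 * β ^ 12 + (-12269024588370789585151276779359137389714016295553080339/11877071710790336413663550253243606247599268630463858073600) * α ^ 5 * β ^ 13 + (12269024588370789585151276779359137389714016295553080339/11028709445733883812687582378011920087056463728287868211200) * α ^ 5 * β ^ 14 + (658909351930300988565885471137602881698999076959000473/30880386448054874675525230658433376243758098439206030991360) * α ^ 6 + (1938068150878185322223801473100452500864886442687531684651/849210627321509053576943843106917846703347707078165852262400) * α ^ 6 * β + (-2663376654785022995811078695902439853299326019290053255799/679368501857207242861555074485534277362678165662532681809920) * α ^ 6 * β ^ 2 + (500816628186986843527261320606735654892710746769143774557/117132500320208145320957771463023151269427269941815979622400) * α ^ 6 * β ^ 3 + (1277474211677294638796335236912932926865942482055423901749/169842125464301810715388768621383569340669541415633170452480) * α ^ 6 * β ^ 4 + (-6060058140930932492887193752791459313330749422020642809761/566140418214339369051295895404611897802231804718777234841600) * α ^ 6 * β ^ 5 + (-29948096379014625218109860131726096909294951511989432681/2058692429870324978368348710562225082917206562613735399424)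 * α ^ 6 * β ^ 6 + (1903534360774775529066304903504778462584748242895539508651/84921062732150905357694384310691784670334770707816585226240) * α ^ 6 * β ^ 7 + (-5785041591290321471740695152754767220846107587224613463863/339684250928603621430777537242767138681339082831266340904960) * α ^ 6 * β ^ 8 + (-239101461840091361369612768188674639960354151273846354147/113228083642867873810259179080922379560446360943755446968320) * α ^ 6 * β ^ 9 + (22514246097670991148674736816514045618057616848400817988349/3396842509286036214307775372427671386813390828312663409049600) * α ^ 6 * β ^ 10 + (-2874101125727840792792545699181696204062000041809726324329/377426945476226246034197263603074598534821203145851489894400) * α ^ 6 * β ^ 11 + (85496051806105144962439992356993514747805689017725985119/25733655373379062229604358882027813536465082032671692492800) * α ^ 6 * β ^ 12 + (-12269024588370789585151276779359137389714016295553080339/11028709445733883812687582378011920087056463728287868211200) * α ^ 6 * β ^ 13 + (1576948868279660694173226097943950451662671447407562863/5146731074675812445920871776405562707293016406534338498560) * α ^ 7 + (73152506332726911948698200236904400736491320070552743463/424605313660754526788471921553458923351673853539082926131200) * α ^ 7 * β + (1927915767537064226978534246090434248221656657924895029579/566140418214339369051295895404611897802231804718777234841600) * α ^ 7 * β ^ 2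 + (-639558157504237983792945350604172329942997757622839303129/154401932240274373377626153292166881218790492196030154956800) * α ^ 7 * β ^ 3 + (-20420425016332937677412484274665140628156721871389811419/7720096612013718668881307664608344060939524609801507747840) * α ^ 7 * β ^ 4 + (-11574705694564966034873985283413407642436653852794835141/16651188771009981442685173394253291111830347197611095142400) * α ^ 7 * β ^ 5 + (111179573307271759011951168842951965998035523174535816043/13064778881869370055029905278567966872359195493510243880960) * α ^ 7 * β ^ 6 + (-454782973286934195992362922585338298336590364008978310239/35383776138396210565705993462788243612639487794923577177600) * α ^ 7 * β ^ 7 + (1822372766023640723925655455445197350180506159703006133731/283070209107169684525647947702305948901115902359388617420800) * α ^ 7 * β ^ 8 + (1164280126204222961476354565273356023895427807260388832803/849210627321509053576943843106917846703347707078165852262400) * α ^ 7 * β ^ 9 + (-22055530135821005133992204276321215580398375634095889923/4193632727513624955935525151145273317053568923842794332160) * α ^ 7 * β ^ 10 + (8224755201841114377597539486604589596520572596757848669107/1698421254643018107153887686213835693406695414156331704524800) * α ^ 7 * β ^ 11 + (-1077117773957051444402120205026146866792222506891041130399/424605313660754526788471921553458923351673853539082926131200) * α ^ 7 * β ^ 12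 + (125648487456350562153153800710673659018878822876782177473/141535104553584842262823973851152974450557951179694308710400) * α ^ 7 * β ^ 13 + (-438877739965209989933826235950390945307713871374322243/3032895097576818048489085153953278023940527525279163758080) * α ^ 7 * β ^ 14) * h1 + ((-108595065374618355221171591158400249019225099148361/53558223804068977334341406264626651549419501399999360) + (74410071488137918825623347247592552931242890811124119/49487798794959735056931459388515026031663619293599408640) * β + (-8382509968753292909252686750526130386986701153907979/3092987424684983441058216211782189126978976205849963040) * β ^ 2 + (1694279070249107104444095586374818118333411043008941/3806753753458441158225496876039617387051047637969185280) * β ^ 3 + (-3091461708261349516951324318728848622688309655071547/1499630266513931365361559375409546243383746039199982080) * β ^ 4 + (-1216689106055792088821681746698936645135986318130797/1455523493969403972262689982015147824460694685105864960) * β ^ 5 + (1599584594340780050363281261043971189625784808911491/3806753753458441158225496876039617387051047637969185280) * β ^ 6 + (-1576948868279660694173226097943950451662671447407562863/5146731074675812445920871776405562707293016406534338498560) * β ^ 7 + (-16445078651643649517451416800747852977532051890610157479/989755975899194701138629187770300520633272385871988172800) * α + (12847953160938873545144925698915036681704094141971282957/5443657867445570856262460532736652863482998122295934950400) * α * β +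 (1537315672671071189029810937869204942812291852409416251/50404239513384915335763523451265304291509241873110508800) * α * β ^ 2 + (1550893351486536754892047382074586695951602033434231/575196308901687537643962440060931198592878077165673600) * α * β ^ 3 + (-7544640279188162871713286125671106024481722394953440531/989755975899194701138629187770300520633272385871988172800) * α * β ^ 4 + (269702428526452487223251093104952762738312252489906033/15248341365393755899894847430634881970540610986823347200) * α * β ^ 5 + (-2564930978048523940736321549572176901268763779887955377/418742912880428527404804656364357912575615240176610380800) * α * β ^ 6 + (-73152506332726911948698200236904400736491320070552743463/424605313660754526788471921553458923351673853539082926131200) * α * β ^ 7 + (3195481509508817807163882924562176976889880838982146343/494877987949597350569314593885150260316636192935994086400) * α ^ 2 + (2289111924750755926798980529155677490728765256333419549/544365786744557085626246053273665286348299812229593495040) * α ^ 2 * β + (269992306479744559153801871337050531712970348107980219/16201362700730865643638275395049562093699399173499806400) * α ^ 2 * β ^ 2 + (-808164638970719146467341605082433649011800312884708871/20937145644021426370240232818217895628780762008830519040) * α ^ 2 * β ^ 3 + (4748655670095185233136561725759778076654944074935293879/494877987949597350569314593885150260316636192935994086400) * α ^ 2 * β ^ 4 + (-341592583839463049311330115812495065323787057651116119/10673838955775629129926393201444417379378427690776343040)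 * α ^ 2 * β ^ 5 + (2748699278527520178149443850235533916467483371932942407/209371456440214263702402328182178956287807620088305190400) * α ^ 2 * β ^ 6 + (-1927915767537064226978534246090434248221656657924895029579/566140418214339369051295895404611897802231804718777234841600) * α ^ 2 * β ^ 7 + (-2237577811670797137734589952688972537692258650055002407/1979511951798389402277258375540601041266544771743976345600) * α ^ 3 + (6655928356740142198893984830322073820733302048688794177/403233916107079322686108187610122434332073934984884070400) * α ^ 3 * β + (-3674529181080728746682669536175825567944706794997295727/544365786744557085626246053273665286348299812229593495040) * α ^ 3 * β ^ 2 + (-9987344739642717579083151578939992198565506948201424167/418742912880428527404804656364357912575615240176610380800) * α ^ 3 * β ^ 3 + (13800312466585311914202461127551933085280941157475236441/1979511951798389402277258375540601041266544771743976345600) * α ^ 3 * β ^ 4 + (4844982016342527827441035609309775233082593781937799841/640430337346537747795583592086665042762705661446580582400) * α ^ 3 * β ^ 5 + (-157963059384012745246996951466778852143480908976326439/18610796128019045662435762505082573892249566230071572480) * α ^ 3 * β ^ 6 + (639558157504237983792945350604172329942997757622839303129/154401932240274373377626153292166881218790492196030154956800) * α ^ 3 * β ^ 7 + (-117226859129571539133468952384528949970961189693580933/659837317266129800759086125180200347088848257247992115200)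 * α ^ 4 + (-75033427535021071199606548947996526200523182847896261881/10887315734891141712524921065473305726965996244591869900800) * α ^ 4 * β + (28540114473902434712281823880457964314845491600240956663/2721828933722785428131230266368326431741499061147967475200) * α ^ 4 * β ^ 2 + (7138648383711179416016538521601341713831636073832905743/418742912880428527404804656364357912575615240176610380800) * α ^ 4 * β ^ 3 + (-826648052715679507168011390026633830820503174785731477/26393492690645192030363445007208013883553930289919684608) * α ^ 4 * β ^ 4 + (7165606231316931507839364712173126731087238383668815761/640430337346537747795583592086665042762705661446580582400) * α ^ 4 * β ^ 5 + (-1398832159886477231628382973942908029066088457696793223/837485825760857054809609312728715825151230480353220761600) * α ^ 4 * β ^ 6 + (20420425016332937677412484274665140628156721871389811419/7720096612013718668881307664608344060939524609801507747840) * α ^ 4 * β ^ 7 + (26232150656615653951333794915689276755383533965254869/9751290402947731045700780175076852420032240254896435200) * α ^ 5 + (845455414754139840907792157467346254608694006331642369/75084936102697529051896007348091763634248249962702551040) * α ^ 5 * β + (-114097531602032399483526524429065620001380420537682379/31285390042790637104956669728371568180936770817792729600) * α ^ 5 * β ^ 2 + (-102519469301812905808388721203146346318632186953127031/2887882157796058809688307974926606293624932690873175040)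 * α ^ 5 * β ^ 3 + (1885792078293312459983207706157546754876390567291054699/68259032820634117319905461225537966940225681784275046400) * α ^ 5 * β ^ 4 + (-19269694125209029046147296544406820570506763348503379/1472253649072500569645019751923367914397024509072599040) * α ^ 5 * β ^ 5 + (-358246444081073361659555571092407995816174919524733/28878821577960588096883079749266062936249326908731750400) * α ^ 5 * β ^ 6 + (11574705694564966034873985283413407642436653852794835141/16651188771009981442685173394253291111830347197611095142400) * α ^ 5 * β ^ 7 + (-1819145811284117583993804370559266746412771001872361569/1979511951798389402277258375540601041266544771743976345600) * α ^ 6 + (-33184410415490428939033940236662565281917837004132684923/10887315734891141712524921065473305726965996244591869900800) * α ^ 6 * β + (101725633281254254896032622996831038811610105152675919/43203633868615641716368734386798832249865064462666150400) * α ^ 6 * β ^ 2 + (5099115877604814345264427474673368799819171554578246299/418742912880428527404804656364357912575615240176610380800) * α ^ 6 * β ^ 3 + (-27358594861876768775516863837108860239882669782940143441/1979511951798389402277258375540601041266544771743976345600) * α ^ 6 * β ^ 4 + (1254907009320374575136756390844710754654137599012806941/213476779115512582598527864028888347587568553815526860800) * α ^ 6 * β ^ 5 + (-871744424469952642375050729052076869976493377779039597/837485825760857054809609312728715825151230480353220761600)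 * α ^ 6 * β ^ 6 + (-111179573307271759011951168842951965998035523174535816043/13064778881869370055029905278567966872359195493510243880960) * α ^ 6 * β ^ 7 + (150448810671932312334812202976181348283859205399460341/141393710842742100162661312538614360090467483695998310400) * α ^ 7 + (665850112818487757261991481418593413439388335764987173/259221803211693850298212406320792993499190386775996902400) * α ^ 7 * β + (-13477648867745723706172272174163743726515687342018497/194416352408770387723659304740594745124392790081997676800) * α ^ 7 * β ^ 2 + (-297149985257149914502366341956785481139168079059137507/29910208062887751957486046883168422326829660012615027200) * α ^ 7 * β ^ 3 + (178123389602536747374342601066374779026044549616898449/28278742168548420032532262507722872018093496739199662080) * α ^ 7 * β ^ 4 + (-166375331797232108541658409286892683519833189043224339/45745024096181267699684542291904645911621832960470041600) * α ^ 7 * β ^ 5 + (557199246880326457457523916832172049785915911748979/19940138708591834638324031255445614884553106675076684800) * α ^ 7 * β ^ 6 + (454782973286934195992362922585338298336590364008978310239/35383776138396210565705993462788243612639487794923577177600) * α ^ 7 * β ^ 7 + (-1822372766023640723925655455445197350180506159703006133731/283070209107169684525647947702305948901115902359388617420800) * α ^ 8 * β ^ 7 + (-1164280126204222961476354565273356023895427807260388832803/849210627321509053576943843106917846703347707078165852262400)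 * α ^ 9 * β ^ 7 + (22055530135821005133992204276321215580398375634095889923/4193632727513624955935525151145273317053568923842794332160) * α ^ 10 * β ^ 7 + (-8224755201841114377597539486604589596520572596757848669107/1698421254643018107153887686213835693406695414156331704524800) * α ^ 11 * β ^ 7 + (1077117773957051444402120205026146866792222506891041130399/424605313660754526788471921553458923351673853539082926131200) * α ^ 12 * β ^ 7 + (-125648487456350562153153800710673659018878822876782177473/141535104553584842262823973851152974450557951179694308710400) * α ^ 13 * β ^ 7 + (438877739965209989933826235950390945307713871374322243/3032895097576818048489085153953278023940527525279163758080) * α ^ 14 * β ^ 7) * h3 + ((1106693737792481013757549648997907481229944781150821357/38821057248983271020660289970601958706438752323573296103424) + (2482403084135957048375655519895260393634246198285861415/67936850185720724286155507448553427736267816566253268180992) * β + (-670566165391316542378974098148602754775042414861588319/388210572489832710206602899706019587064387523235732961034240) * β ^ 2 + (1281361889428567385590246139232153326220227857127992253/905824669142942990482073432647379036483570887550043575746560) * β ^ 3 + (8406552351590115209905043144546531955550725227179777591/388210572489832710206602899706019587064387523235732961034240) * β ^ 4 + (-3056666554762469019572135789082879618754166185221933887/543494801485765794289244059588427421890142532530026145447936)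 * β ^ 5 + (1576948868279660694173226097943950451662671447407562863/194105286244916355103301449853009793532193761617866480517120) * β ^ 6 + (2482403084135957048375655519895260393634246198285861415/67936850185720724286155507448553427736267816566253268180992) * α + (-1501555350594615671667000793441836681167753857406330647/33968425092860362143077753724276713868133908283126634090496) * α * β + (-19650788630593125585979999432710558387042625966739605703/3396842509286036214307775372427671386813390828312663409049600) * α * β ^ 2 + (31082378093008701795590005565290006070217731511426665723/1132280836428678738102591790809223795604463609437554469683200) * α * β ^ 3 + (-101054306736125594737277671853508839770531795109038628573/3396842509286036214307775372427671386813390828312663409049600) * α * β ^ 4 + (10175584702796676839492092322676023662186041740257955371/679368501857207242861555074485534277362678165662532681809920) * α * β ^ 5 + (-1639342629082334361836709106464392442495695399716924027/242631607806145443879126812316262241915242202022333100646400) * α * β ^ 6 + (-670566165391316542378974098148602754775042414861588319/388210572489832710206602899706019587064387523235732961034240) * α ^ 2 + (-19650788630593125585979999432710558387042625966739605703/3396842509286036214307775372427671386813390828312663409049600) * α ^ 2 * β + (46988335586888217773178004056937534031823380059816383949/3882105724898327102066028997060195870643875232357329610342400) * α ^ 2 * β ^ 2 + (-109991299706197501874014120559223096601723718428797061927/9058246691429429904820734326473790364835708875500435757465600)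 * α ^ 2 * β ^ 3 + (40326946697912197030126716676118488542814617496117857883/3882105724898327102066028997060195870643875232357329610342400) * α ^ 2 * β ^ 4 + (-92151045746312105726313503983005530363606431494601127503/27174740074288289714462202979421371094507126626501307272396800) * α ^ 2 * β ^ 5 + (3834496455855720309812244867051996072805461656439047411/1941052862449163551033014498530097935321937616178664805171200) * α ^ 2 * β ^ 6 + (1281361889428567385590246139232153326220227857127992253/905824669142942990482073432647379036483570887550043575746560) * α ^ 3 + (31082378093008701795590005565290006070217731511426665723/1132280836428678738102591790809223795604463609437554469683200) * α ^ 3 * β + (-109991299706197501874014120559223096601723718428797061927/9058246691429429904820734326473790364835708875500435757465600) * α ^ 3 * β ^ 2 + (28238315036352407732100996430995751232024867036786928931/3019415563809809968273578108824596788278569625166811919155200) * α ^ 3 * β ^ 3 + (10601876235455413212376668133716690540920818277875770691/1811649338285885980964146865294758072967141775100087151493120) * α ^ 3 * β ^ 4 + (-6851767361696029136202141201562209815319261107466929237/9058246691429429904820734326473790364835708875500435757465600) * α ^ 3 * β ^ 5 + (2048020566071090394567096350728824050222646927516264673/647017620816387850344338166176699311773979205392888268390400) * α ^ 3 * β ^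 6 + (8406552351590115209905043144546531955550725227179777591/388210572489832710206602899706019587064387523235732961034240) * α ^ 4 + (-101054306736125594737277671853508839770531795109038628573/3396842509286036214307775372427671386813390828312663409049600) * α ^ 4 * β + (40326946697912197030126716676118488542814617496117857883/3882105724898327102066028997060195870643875232357329610342400) * α ^ 4 * β ^ 2 + (10601876235455413212376668133716690540920818277875770691/1811649338285885980964146865294758072967141775100087151493120) * α ^ 4 * β ^ 3 + (-38116109092235868964861428617696208049155824066035187363/3882105724898327102066028997060195870643875232357329610342400) * α ^ 4 * β ^ 4 + (157875482907219006230060182918248383392826769032009308247/27174740074288289714462202979421371094507126626501307272396800) * α ^ 4 * β ^ 5 + (-6103829448827240001280423503896965507906479773703592987/1941052862449163551033014498530097935321937616178664805171200) * α ^ 4 * β ^ 6 + (-3056666554762469019572135789082879618754166185221933887/543494801485765794289244059588427421890142532530026145447936) * α ^ 5 + (10175584702796676839492092322676023662186041740257955371/679368501857207242861555074485534277362678165662532681809920) * α ^ 5 * β + (-92151045746312105726313503983005530363606431494601127503/27174740074288289714462202979421371094507126626501307272396800) * α ^ 5 * β ^ 2 + (-6851767361696029136202141201562209815319261107466929237/9058246691429429904820734326473790364835708875500435757465600)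 * α ^ 5 * β ^ 3 + (157875482907219006230060182918248383392826769032009308247/27174740074288289714462202979421371094507126626501307272396800) * α ^ 5 * β ^ 4 + (-12415609630701952409964759110258853902984650170627779593/5434948014857657942892440595884274218901425325300261454479360) * α ^ 5 * β ^ 5 + (3813624497315024506709809003305708474321477930777724633/1941052862449163551033014498530097935321937616178664805171200) * α ^ 5 * β ^ 6 + (1576948868279660694173226097943950451662671447407562863/194105286244916355103301449853009793532193761617866480517120) * α ^ 6 + (-1639342629082334361836709106464392442495695399716924027/242631607806145443879126812316262241915242202022333100646400) * α ^ 6 * β + (3834496455855720309812244867051996072805461656439047411/1941052862449163551033014498530097935321937616178664805171200) * α ^ 6 * β ^ 2 + (2048020566071090394567096350728824050222646927516264673/647017620816387850344338166176699311773979205392888268390400) * α ^ 6 * β ^ 3 + (-6103829448827240001280423503896965507906479773703592987/1941052862449163551033014498530097935321937616178664805171200) * α ^ 6 * β ^ 4 + (3813624497315024506709809003305708474321477930777724633/1941052862449163551033014498530097935321937616178664805171200) * α ^ 6 * β ^ 5 + (-161691798934551048922988613244880874587052478927381879/194105286244916355103301449853009793532193761617866480517120) * α ^ 6 * β ^ 6)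 * hdet
    exact sub_eq_zero.mp h6
  refine ⟨key, ?_⟩
  rintro ⟨d, hdeg, hdP, hdQ⟩
  have hP' : derivative P
      = 448 * X ^ 7 - 364 * X ^ 6 + 1080 * X ^ 5 - 200 * X ^ 4
        + 160 * X ^ 3 + 852 * X ^ 2 + 168 * X + 128 := by
    rw [hP]
    simp only [derivative_sub, derivative_add, derivative_mul, derivative_X_pow,
      derivative_ofNat, derivative_X, derivative_one, map_ofNat, Nat.cast_ofNat]
    ring
  have hNne : ((5626010480595179875200 : ℂ)) ≠ 0 := by norm_num
  have hsep : P.Separable := by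
    rw [Polynomial.separable_def]
    refine ⟨C (5626010480595179875200 : ℂ)⁻¹ * ((-90465950429250363248 : ℂ[X]) + (-127973673537846564508 : ℂ[X]) * X + (-2219013365561777828 : ℂ[X]) * X ^ 2 + (-32848181409693110327 : ℂ[X]) * X ^ 3 + (-130637732295820993238 : ℂ[X]) * X ^ 4 + (30414789885522233093 : ℂ[X]) * X ^ 5 + (-65001150419452115344 : ℂ[X]) * X ^ 6),
            C (5626010480595179875200 : ℂ)⁻¹ * ((15682597370509104260 : ℂ[X]) + (29890768399880112498 : ℂ[X]) * X + (43029589558010186934 : ℂ[X]) * X ^ 2 + (1617997279416982775 : ℂ[X]) * X ^ 3 + (4293586226467008269 : ℂ[X]) * X ^ 4 + (22533869611706437149 : ℂ[X]) * X ^ 5 + (-4744945784186794203 : ℂ[X]) * X ^ 6 + (8125143802431514418 : ℂ[X]) * X ^ 7), ?_⟩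
    have hkey : ((-90465950429250363248 : ℂ[X]) + (-127973673537846564508 : ℂ[X]) * X + (-2219013365561777828 : ℂ[X]) * X ^ 2 + (-32848181409693110327 : ℂ[X]) * X ^ 3 + (-130637732295820993238 : ℂ[X]) * X ^ 4 + (30414789885522233093 : ℂ[X]) * X ^ 5 + (-65001150419452115344 : ℂ[X]) * X ^ 6) * P + ((15682597370509104260 : ℂ[X]) + (29890768399880112498 : ℂ[X]) * X + (43029589558010186934 : ℂ[X]) * X ^ 2 + (1617997279416982775 : ℂ[X]) * X ^ 3 + (4293586226467008269 : ℂ[X]) * X ^ 4 + (22533869611706437149 : ℂ[X]) * X ^ 5 + (-4744945784186794203 : ℂ[X]) * X ^ 6 + (8125143802431514418 : ℂ[X]) * X ^ 7) * derivative P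
        = (5626010480595179875200 : ℂ[X]) := by
      rw [hP', hP]
      ring
    calc C (5626010480595179875200 : ℂ)⁻¹ * ((-90465950429250363248 : ℂ[X]) + (-127973673537846564508 : ℂ[X]) * X + (-2219013365561777828 : ℂ[X]) * X ^ 2 + (-32848181409693110327 : ℂ[X]) * X ^ 3 + (-130637732295820993238 : ℂ[X]) * X ^ 4 + (30414789885522233093 : ℂ[X]) * X ^ 5 + (-65001150419452115344 : ℂ[X]) * X ^ 6) * P
          + C (5626010480595179875200 : ℂ)⁻¹ * ((15682597370509104260 : ℂ[X]) + (29890768399880112498 : ℂ[X]) * X + (43029589558010186934 : ℂ[X]) * X ^ 2 + (1617997279416982775 : ℂ[X]) * X ^ 3 + (4293586226467008269 : ℂ[X]) * X ^ 4 + (22533869611706437149 : ℂ[X]) * X ^ 5 + (-4744945784186794203 : ℂ[X]) * X ^ 6 + (8125143802431514418 : ℂ[X]) * X ^ 7) * derivative P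
        = C (5626010480595179875200 : ℂ)⁻¹
            * (((-90465950429250363248 : ℂ[X]) + (-127973673537846564508 : ℂ[X]) * X + (-2219013365561777828 : ℂ[X]) * X ^ 2 + (-32848181409693110327 : ℂ[X]) * X ^ 3 + (-130637732295820993238 : ℂ[X]) * X ^ 4 + (30414789885522233093 : ℂ[X]) * X ^ 5 + (-65001150419452115344 : ℂ[X]) * X ^ 6) * P + ((15682597370509104260 : ℂ[X]) + (29890768399880112498 : ℂ[X]) * X + (43029589558010186934 : ℂ[X]) * X ^ 2 + (1617997279416982775 : ℂ[X]) * X ^ 3 + (4293586226467008269 : ℂ[X]) * X ^ 4 + (22533869611706437149 : ℂ[X]) * X ^ 5 + (-4744945784186794203 : ℂ[X]) * X ^ 6 + (8125143802431514418 : ℂ[X]) * X ^ 7) * derivative P) := by ring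
      _ = C (5626010480595179875200 : ℂ)⁻¹ * (5626010480595179875200 : ℂ[X]) := by
            rw [hkey]
      _ = 1 := by
            rw [← map_ofNat (C : ℂ →+* ℂ[X]) 5626010480595179875200, ← C_mul,
              inv_mul_cancel₀ hNne, C_1]
  have hsq : Squarefree P := hsep.squarefree
  have hd0 : d ≠ 0 := by
    rintro rfl
    simp at hdeg
  have hddeg : (0 : WithBot ℕ) < d.degree := lt_of_lt_of_le (by norm_num) hdeg
  obtain ⟨α, hα⟩ := Complex.exists_root hddeg
  obtain ⟨e, he⟩ := (dvd_iff_isRoot.mpr hα : (X - C α) ∣ d)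
  have he0 : e ≠ 0 := by
    rintro rfl
    rw [mul_zero] at he
    exact hd0 he
  have hedeg : (0 : WithBot ℕ) < e.degree := by
    have hdm : d.degree = 1 + e.degree := by
      rw [he, degree_mul, degree_X_sub_C]
    by_contra hc
    push_neg at hc
    have hle : d.degree ≤ 1 := by
      rw [hdm]
      have h2 := add_le_add_right hc (1 : WithBot ℕ)
      simpa using h2
    have h3 : (2 : WithBot ℕ) ≤ 1 := le_trans hdeg hle
    norm_num at h3
  obtain ⟨β, hβ⟩ := Complex.exists_root hedeg
  by_cases heq : α = β
  · subst heq
    obtain ⟨f, hf⟩ := (dvd_iff_isRoot.mpr hβ : (X - C α) ∣ e)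
    obtain ⟨g, hg⟩ := hdP
    have hsqdvd : (X - C α) * (X - C α) ∣ P :=
      ⟨f * g, by rw [hg, he, hf]; ring⟩
    exact (Polynomial.not_isUnit_X_sub_C α) (hsq _ hsqdvd)
  · obtain ⟨g, hg⟩ := hdP
    obtain ⟨q, hq⟩ := hdQ
    have hdβ : d.eval β = 0 := by rw [he, eval_mul, hβ, mul_zero]
    have hPα : P.eval α = 0 := by rw [hg, eval_mul, hα, zero_mul]
    have hPβ : P.eval β = 0 := by rw [hg, eval_mul, hdβ, zero_mul]
    have hQα : (C a * A + C b * B).eval α = 0 := by rw [hq, eval_mul, hα, zero_mul]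
    have hQβ : (C a * A + C b * B).eval β = 0 := by rw [hq, eval_mul, hdβ, zero_mul]
    exact heq (key α β hPα hQα hPβ hQβ)
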